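/- Let C be a model category, A an object, Δ_A = p ∘ r a factorization of the diagonal with r : A → P a trivial cofibration and p : P → A × A a fibration, g : D → P a fibration, and d : A → D a morphism with g ∘ d = r. If J, J' : P → D both satisfy g ∘ J = id_P = g ∘ J' and J ∘ r = d = J' ∘ r, then J and J' are right homotopic: there exists a path object for D, i.e. a factorization of the diagonal Δ_D : D → D × D as a weak equivalence s : D → D^I followed by a fibration q : D^I → D × D, together with a morphism H : P → D^I such that fst ∘ q ∘ H = J and snd ∘ q ∘ H = J'. -/

import Mathlib

/-!
STATEMENT 3: In a model category `C`, given a very good path object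
`Δ_A = r ≫ p` for `A` (with `r : A ⟶ P` a trivial cofibration, `p` a fibration),
a fibration `g : D ⟶ P` and `d : A ⟶ D` with `d ≫ g = r`, any two fillers
`J J' : P ⟶ D` with `J ≫ g = 𝟙 P = J' ≫ g` and `r ≫ J = d = r ≫ J'` are right
homotopic: there exist a path object for `D`, i.e. a factorization of the
diagonal `Δ_D` as a weak equivalence `s : D ⟶ DI` followed by a fibration
`q : DI ⟶ D ⨯ D`, and a morphism `H : P ⟶ DI` with
`H ≫ q ≫ fst = J` and `H ≫ q ≫ snd = J'`.
-/

open CategoryTheory Limits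


/-- A weak factorization system on a category: every map factors as a map in the
left class followed by a map in the right class, and each class is characterized
by the (left, resp. right) lifting property against the other. -/
structure WeakFactorizationSystem {C : Type*} [Category C]
    (L R : CategoryTheory.MorphismProperty C) : Prop where
  factorization : ∀ {X Y : C} (f : X ⟶ Y),
    ∃ (Z : C) (i : X ⟶ Z) (p : Z ⟶ Y), L i ∧ R p ∧ i ≫ p = f
  left_iff : ∀ {X Y : C} (i : X ⟶ Y),
    L i ↔ ∀ {W Z : C} (p : W ⟶ Z), R p → HasLiftingProperty i p
  right_iff : ∀ {X Y : C} (p : X ⟶ Y),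
    R p ↔ ∀ {W Z : C} (i : W ⟶ Z), L i → HasLiftingProperty i p

/-- A (closed) model structure on a bicomplete category `C`: classes of
weak equivalences, fibrations and cofibrations such that weak equivalences
satisfy three-for-two and both (cofibrations, trivial fibrations) and
(trivial cofibrations, fibrations) are weak factorization systems. -/
structure ModelStructure (C : Type*) [Category C] [HasLimits C] [HasColimits C] where
  weq : CategoryTheory.MorphismProperty C
  fib : CategoryTheory.MorphismProperty C
  cof : CategoryTheory.MorphismProperty C
  three_for_two_comp : ∀ {X Y Z : C} (f : X ⟶ Y) (g : Y ⟶ Z),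
    weq f → weq g → weq (f ≫ g)
  three_for_two_left : ∀ {X Y Z : C} (f : X ⟶ Y) (g : Y ⟶ Z),
    weq g → weq (f ≫ g) → weq f
  three_for_two_right : ∀ {X Y Z : C} (f : X ⟶ Y) (g : Y ⟶ Z),
    weq f → weq (f ≫ g) → weq g
  wfs_cof_trivFib :
    WeakFactorizationSystem cof (fun {_ _} p => fib p ∧ weq p)
  wfs_trivCof_fib :
    WeakFactorizationSystem (fun {_ _} i => cof i ∧ weq i) fib

theorem eliminators_right_homotopic
    {C : Type*} [Category C] [HasLimits C] [HasColimits C]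
    (M : ModelStructure C) (A P D : C)
    (r : A ⟶ P) (p : P ⟶ A ⨯ A)
    (hr : M.cof r ∧ M.weq r) (hp : M.fib p)
    (hfact : r ≫ p = prod.lift (𝟙 A) (𝟙 A))
    (g : D ⟶ P) (hg : M.fib g) (d : A ⟶ D) (hd : d ≫ g = r)
    (J J' : P ⟶ D)
    (hJ : J ≫ g = 𝟙 P) (hJ' : J' ≫ g = 𝟙 P)
    (hJr : r ≫ J = d) (hJ'r : r ≫ J' = d) :
    ∃ (DI : C) (s : D ⟶ DI) (q : DI ⟶ D ⨯ D),
      M.weq s ∧ M.fib q ∧ s ≫ q = prod.lift (𝟙 D) (𝟙 D) ∧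
      ∃ H : P ⟶ DI, H ≫ q ≫ prod.fst = J ∧ H ≫ q ≫ prod.snd = J' := by
  obtain ⟨DI, s, q, hs, hq, hsq⟩ :=
    M.wfs_trivCof_fib.factorization (prod.lift (𝟙 D) (𝟙 D))
  refine ⟨DI, s, q, hs.2, hq, hsq, ?_⟩
  have hlift : HasLiftingProperty r q :=
    (M.wfs_trivCof_fib.right_iff q).mp hq r hr
  have hcomm : r ≫ prod.lift J J' = (d ≫ s) ≫ q := by
    rw [Category.assoc, hsq]
    ext <;> simp [hJr, hJ'r]
  obtain ⟨⟨⟨H, _, hH2⟩⟩⟩ := hlift.sq_hasLift (CommSq.mk hcomm.symm)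
  refine ⟨H, ?_, ?_⟩
  · rw [← Category.assoc, hH2]; exact prod.lift_fst J J'
  · rw [← Category.assoc, hH2]; exact prod.lift_snd J J'
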